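/- Let Γ, Φ ∈ ℝ^{m×m} be symmetric positive definite matrices and define the integral resonant controller C(s) = (sI + ΓΦ)⁻¹Γ. Then every eigenvalue of −ΓΦ has negative real part (so C(s) is defined and has no poles in the closed right half-plane), and j(C(jω) − C(jω)ᴴ) ≻ 0 for every ω ∈ (0,∞); that is, C is strictly negative imaginary. -/

import Mathlib

open Matrix Filter Topology ComplexOrder

section SNIAux

variable {n : ℕ}

private lemma herm_map {A : Matrix (Fin n) (Fin n) ℝ} (hA : A.IsHermitian) :
    (A.map Complex.ofReal).IsHermitian :=
  hA.map Complex.ofReal fun x => (Complex.conj_ofReal x).symm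

private lemma posDef_map {A : Matrix (Fin n) (Fin n) ℝ} (hA : A.PosDef) :
    (A.map Complex.ofReal).PosDef := by
  open MatrixOrder in
  obtain ⟨S, hsq, hSH0⟩ : ∃ S : Matrix (Fin n) (Fin n) ℝ, S * S = A ∧ S.IsHermitian :=
    ⟨CFC.sqrt A, CFC.sqrt_mul_sqrt_self A hA.posSemidef.nonneg,
      (nonneg_iff_posSemidef.mp (CFC.sqrt_nonneg A)).1⟩
  have hdetS : S.det ≠ 0 := by
    intro h
    have h2 : S.det * S.det = A.det := by rw [← det_mul, hsq]
    rw [h, mul_zero] at h2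
    exact hA.det_pos.ne h2
  have hmap : A.map Complex.ofReal = S.map Complex.ofReal * S.map Complex.ofReal := by
    rw [← hsq]
    exact Matrix.map_mul (f := Complex.ofRealHom)
  have hSH : (S.map Complex.ofReal).IsHermitian := herm_map hSH0
  have hdet : IsUnit (S.map Complex.ofReal).det := by
    have hh := RingHom.map_det Complex.ofRealHom S
    simp only [RingHom.mapMatrix_apply] at hh
    rw [show S.map Complex.ofReal = Complex.ofRealHom.mapMatrix S from rfl,
      ← RingHom.map_det]
    exact Ne.isUnit (Complex.ofReal_ne_zero.mpr hdetS)
  refine PosDef.of_dotProduct_mulVec_pos (herm_map hA.1) fun x hx => ?_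
  have hy : S.map Complex.ofReal *ᵥ x ≠ 0 := by
    intro h
    have hinj := (Matrix.mulVec_injective_iff_isUnit.mpr ((isUnit_iff_isUnit_det _).mpr hdet))
    apply hx
    apply hinj
    simpa using h
  have : star x ⬝ᵥ (A.map Complex.ofReal *ᵥ x)
      = star (S.map Complex.ofReal *ᵥ x) ⬝ᵥ (S.map Complex.ofReal *ᵥ x) := by
    rw [hmap, star_mulVec, hSH.eq, ← Matrix.dotProduct_mulVec, mulVec_mulVec]
  rw [this]
  exact dotProduct_star_self_pos_iff.mpr hy

private lemma posDef_conj {A B : Matrix (Fin n) (Fin n) ℂ}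
    (hA : A.PosDef) (hB : IsUnit B.det) : (B * A * Bᴴ).PosDef := by
  refine PosDef.of_dotProduct_mulVec_pos (hA.posSemidef.mul_mul_conjTranspose_same B).1 fun x hx => ?_
  have hy : Bᴴ *ᵥ x ≠ 0 := by
    intro h
    have hBH : IsUnit (Bᴴ : Matrix (Fin n) (Fin n) ℂ) := by
      rw [isUnit_iff_isUnit_det, det_conjTranspose]
      exact hB.star
    have hinj := Matrix.mulVec_injective_iff_isUnit.mpr hBH
    apply hx; apply hinj; simpa using h
  have := hA.dotProduct_mulVec_pos hy
  simpa only [star_mulVec, dotProduct_mulVec, vecMul_vecMul, conjTranspose_conjTranspose,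
    mul_assoc] using this

private lemma posDef_smul {A : Matrix (Fin n) (Fin n) ℂ} (hA : A.PosDef) {c : ℝ} (hc : 0 < c) :
    ((c : ℂ) • A).PosDef := by
  refine PosDef.of_dotProduct_mulVec_pos ?_ fun x hx => ?_
  · show ((c : ℂ) • A)ᴴ = (c : ℂ) • A
    rw [conjTranspose_smul, hA.1.eq, Complex.star_def, Complex.conj_ofReal]
  · rw [smul_mulVec, dotProduct_smul, smul_eq_mul]
    exact mul_pos (Complex.zero_lt_real.mpr hc) (hA.dotProduct_mulVec_pos hx)

/-- Core eigen-style computation: if `(ΓΦ) v = μ v` with `v ≠ 0`, there are positive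
complex numbers `a`, `b` with `b = μ * a`. -/
private lemma exists_pos_eq {Γ Φ : Matrix (Fin n) (Fin n) ℝ} (hΓ : Γ.PosDef) (hΦ : Φ.PosDef)
    {μ : ℂ} {v : Fin n → ℂ} (hv0 : v ≠ 0)
    (hv : ((Γ * Φ).map Complex.ofReal) *ᵥ v = μ • v) :
    ∃ a b : ℂ, 0 < a ∧ 0 < b ∧ b = μ * a := by
  set G := Γ.map Complex.ofReal with hGdef
  set P := Φ.map Complex.ofReal with hPdef
  have hGP : (Γ * Φ).map Complex.ofReal = G * P := Matrix.map_mul (f := Complex.ofRealHom)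
  have hG : G.PosDef := posDef_map hΓ
  have hP : P.PosDef := posDef_map hΦ
  have hy : P *ᵥ v ≠ 0 := by
    intro h
    have hinj := Matrix.mulVec_injective_iff_isUnit.mpr hP.isUnit
    apply hv0; apply hinj; simpa using h
  refine ⟨star v ⬝ᵥ (P *ᵥ v), star (P *ᵥ v) ⬝ᵥ (G *ᵥ (P *ᵥ v)), hP.dotProduct_mulVec_pos hv0,
    hG.dotProduct_mulVec_pos hy, ?_⟩
  have hGPv : G *ᵥ (P *ᵥ v) = μ • v := by rw [mulVec_mulVec, ← hGP, hv]
  rw [hGPv, dotProduct_smul, smul_eq_mul, star_mulVec, hP.1.eq, ← Matrix.dotProduct_mulVec]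

/-- If `b = μ * a` with `a, b` positive, then `re μ > 0`. -/
private lemma re_pos_of_eq {μ a b : ℂ} (ha : 0 < a) (hb : 0 < b) (h : b = μ * a) :
    0 < μ.re := by
  rw [Complex.lt_def] at ha hb
  obtain ⟨hare, haim⟩ := ha
  obtain ⟨hbre, hbim⟩ := hb
  simp only [Complex.zero_re, Complex.zero_im] at *
  have hre := congrArg Complex.re h
  simp only [Complex.mul_re, ← haim, mul_zero, sub_zero] at hre
  nlinarith

end SNIAux

/-- Integral resonant controllers are strictly negative imaginary. -/
theorem integral_resonant_controller_sni {m : ℕ} (Γ Φ : Matrix (Fin m) (Fin m) ℝ)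
    (hΓ : Γ.PosDef) (hΦ : Φ.PosDef) :
    (∀ μ ∈ spectrum ℂ ((-(Γ * Φ)).map Complex.ofReal), μ.re < 0) ∧
    (∀ w : ℝ, 0 < w →
      (Complex.I •
        ((((Complex.I * w) • (1 : Matrix (Fin m) (Fin m) ℂ) + (Γ * Φ).map Complex.ofReal)⁻¹ *
            Γ.map Complex.ofReal) -
          (((Complex.I * w) • (1 : Matrix (Fin m) (Fin m) ℂ) + (Γ * Φ).map Complex.ofReal)⁻¹ *
            Γ.map Complex.ofReal)ᴴ)).PosDef) := by
  have hGP : (Γ * Φ).map Complex.ofReal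
      = Γ.map Complex.ofReal * Φ.map Complex.ofReal := Matrix.map_mul (f := Complex.ofRealHom)
  constructor
  · intro μ hμ
    rw [spectrum.mem_iff] at hμ
    have hdet : (algebraMap ℂ (Matrix (Fin m) (Fin m) ℂ) μ
        - (-(Γ * Φ)).map Complex.ofReal).det = 0 := by
      by_contra h
      exact hμ ((isUnit_iff_isUnit_det _).mpr (Ne.isUnit h))
    obtain ⟨v, hv0, hv⟩ := (Matrix.exists_mulVec_eq_zero_iff).mpr hdet
    have hneg : (-(Γ * Φ)).map Complex.ofReal = -((Γ * Φ).map Complex.ofReal) := by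
      ext i j; simp
    rw [hneg, Algebra.algebraMap_eq_smul_one, sub_neg_eq_add, add_mulVec, smul_mulVec,
      one_mulVec] at hv
    have hv' : ((Γ * Φ).map Complex.ofReal) *ᵥ v = (-μ) • v := by
      linear_combination (norm := module) hv
    obtain ⟨a, b, ha, hb, hab⟩ := exists_pos_eq hΓ hΦ hv0 hv'
    have := re_pos_of_eq ha hb hab
    simpa using this
  · intro w hw
    set G := Γ.map Complex.ofReal with hGdef
    set M : Matrix (Fin m) (Fin m) ℂ :=
      (Complex.I * w) • (1 : Matrix (Fin m) (Fin m) ℂ) + (Γ * Φ).map Complex.ofReal with hMdef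
    -- M is invertible
    have hdet : M.det ≠ 0 := by
      intro h
      obtain ⟨v, hv0, hv⟩ := (Matrix.exists_mulVec_eq_zero_iff).mpr h
      rw [hMdef, add_mulVec, smul_mulVec, one_mulVec] at hv
      have hv' : ((Γ * Φ).map Complex.ofReal) *ᵥ v = (-(Complex.I * w)) • v := by
        linear_combination (norm := module) hv
      obtain ⟨a, b, ha, hb, hab⟩ := exists_pos_eq hΓ hΦ hv0 hv'
      rw [Complex.lt_def] at ha hb
      obtain ⟨hare, haim⟩ := ha
      obtain ⟨hbre, hbim⟩ := hb
      simp only [Complex.zero_re, Complex.zero_im] at *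
      have hre := congrArg Complex.re hab
      simp only [Complex.mul_re, Complex.mul_im, Complex.neg_re, Complex.neg_im, Complex.mul_re,
        Complex.I_re, Complex.I_im, Complex.ofReal_re, Complex.ofReal_im, ← haim] at hre
      simp at hre
      rw [hre] at hbre
      simp at hbre
    have hdetu : IsUnit M.det := Ne.isUnit hdet
    have hMH : Mᴴ = (-(Complex.I * w)) • (1 : Matrix (Fin m) (Fin m) ℂ)
        + Φ.map Complex.ofReal * G := by
      rw [hMdef, conjTranspose_add, conjTranspose_smul, conjTranspose_one]
      congr 1
      · congr 1
        simp [Complex.star_def]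
      · rw [hGP, conjTranspose_mul, (herm_map hΓ.1).eq, (herm_map hΦ.1).eq]
    have hdetH : IsUnit Mᴴ.det := by
      rw [det_conjTranspose]; exact hdetu.star
    have hNH : (M⁻¹)ᴴ = (Mᴴ)⁻¹ := M.conjTranspose_nonsing_inv
    have hGH : Gᴴ = G := (herm_map hΓ.1).eq
    -- key commutation identity
    have hkey : G * Mᴴ - M * G = (-(2 * Complex.I * w)) • G := by
      rw [hMH, hMdef, hGP]
      simp only [Matrix.mul_add, Matrix.add_mul, Matrix.mul_smul, Matrix.smul_mul,
        Matrix.mul_one, Matrix.one_mul]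
      rw [← mul_assoc]
      module
    -- express the difference
    have hdiff : M⁻¹ * G - (M⁻¹ * G)ᴴ = (-(2 * Complex.I * w)) • (M⁻¹ * G * (M⁻¹)ᴴ) := by
      have h1 : (M⁻¹ * G)ᴴ = G * (Mᴴ)⁻¹ := by
        rw [conjTranspose_mul, hGH, hNH]
      have h2 : M⁻¹ * (G * Mᴴ - M * G) * (Mᴴ)⁻¹ = M⁻¹ * G - G * (Mᴴ)⁻¹ := by
        rw [Matrix.mul_sub, Matrix.sub_mul]
        congr 1
        · rw [← mul_assoc, mul_assoc (M⁻¹ * G), Matrix.mul_nonsing_inv _ hdetH, mul_one]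
        · rw [← mul_assoc, Matrix.nonsing_inv_mul _ hdetu, one_mul]
      rw [h1, ← h2, hkey, hNH]
      rw [Matrix.mul_smul, Matrix.smul_mul]
    rw [hdiff, smul_smul]
    have hscal : Complex.I * -(2 * Complex.I * w) = ((2 * w : ℝ) : ℂ) := by
      push_cast
      rw [mul_comm Complex.I]
      ring_nf
      rw [Complex.I_sq]
      ring
    rw [hscal]
    have hdetinv : IsUnit (M⁻¹).det := by
      rw [← isUnit_iff_isUnit_det]
      exact Matrix.isUnit_nonsing_inv_iff.mpr ((isUnit_iff_isUnit_det M).mpr hdetu)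
    exact posDef_smul (posDef_conj (posDef_map hΓ) hdetinv) (by positivity)
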